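/- Let Γ be a finite group that is the Zappa–Szép product of subgroups G and A (G·A = Γ, G ∩ A = {1}). Then the assignments H ↦ H·A and H′ ↦ G ∩ H′ give mutually inverse, index-preserving bijections between the set of subgroups H ≤ G such that H·A is a subgroup of Γ, and the set of subgroups of Γ containing A. -/

import Mathlib

open Pointwise

/-- In a finite group `Γ` that is the Zappa–Szép product of subgroups `G` and `A`,
the assignments `H ↦ H·A` and `H′ ↦ G ⊓ H′` are mutually inverse, index-preserving
bijections between the subgroups `H ≤ G` with `H·A` a subgroup of `Γ` and the
subgroups of `Γ` containing `A`. -/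
theorem galois_correspondence_zs_product {Γ : Type*} [Group Γ] [Finite Γ]
    (G A : Subgroup Γ) (hcomp : Subgroup.IsComplement' G A) :
    (∀ H : Subgroup Γ, H ≤ G → ∀ K : Subgroup Γ,
        (K : Set Γ) = (H : Set Γ) * (A : Set Γ) →
        A ≤ K ∧ G ⊓ K = H ∧ K.index = H.relIndex G) ∧
    (∀ H' : Subgroup Γ, A ≤ H' →
        ((G ⊓ H' : Subgroup Γ) : Set Γ) * (A : Set Γ) = (H' : Set Γ) ∧
        (G ⊓ H').relIndex G = H'.index) := by
  have key : ∀ H : Subgroup Γ, H ≤ G → ∀ K : Subgroup Γ,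
      (K : Set Γ) = (H : Set Γ) * (A : Set Γ) →
      A ≤ K ∧ G ⊓ K = H ∧ K.index = H.relIndex G := by
    intro H hHG K hK
    have hAK : A ≤ K := by
      intro a ha
      have : (1 : Γ) * a ∈ (H : Set Γ) * (A : Set Γ) :=
        Set.mul_mem_mul H.one_mem ha
      rw [one_mul] at this
      rw [← SetLike.mem_coe, hK]; exact this
    have hHK : H ≤ K := by
      intro h hh
      have : h * (1 : Γ) ∈ (H : Set Γ) * (A : Set Γ) :=
        Set.mul_mem_mul hh A.one_mem
      rw [mul_one] at this
      rw [← SetLike.mem_coe, hK]; exact this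
    have hGK : G ⊓ K = H := by
      apply le_antisymm
      · intro x hx
        rw [Subgroup.mem_inf] at hx
        obtain ⟨hxG, hxK⟩ := hx
        have hx' : x ∈ (H : Set Γ) * (A : Set Γ) := by rw [← hK]; exact hxK
        obtain ⟨h, hh, a, ha, hha⟩ := Set.mem_mul.mp hx'
        obtain ⟨u, -, huniq⟩ := hcomp.existsUnique x
        have e1 := huniq (⟨⟨h, hHG hh⟩, ⟨a, ha⟩⟩ : ↥(G : Set Γ) × ↥(A : Set Γ)) hha
        have e2 := huniq (⟨⟨x, hxG⟩, ⟨1, A.one_mem⟩⟩ : ↥(G : Set Γ) × ↥(A : Set Γ))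
          (mul_one x)
        have : h = x := by
          have := e1.trans e2.symm
          exact congrArg (fun p : ↥(G : Set Γ) × ↥(A : Set Γ) => (p.1 : Γ)) this
        rwa [← this]
      · exact le_inf hHG hHK
    refine ⟨hAK, hGK, ?_⟩
    -- cardinality of K
    have hbij : Function.Bijective
        (fun p : H × A => (⟨(p.1 : Γ) * (p.2 : Γ), by
          rw [← SetLike.mem_coe, hK]; exact Set.mul_mem_mul p.1.2 p.2.2⟩ : K)) := by
      constructor
      · rintro ⟨⟨h1, hh1⟩, ⟨a1, ha1⟩⟩ ⟨⟨h2, hh2⟩, ⟨a2, ha2⟩⟩ hEq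
        have heq : h1 * a1 = h2 * a2 := congrArg Subtype.val hEq
        obtain ⟨u, -, huniq⟩ := hcomp.existsUnique (h1 * a1)
        have e1 := huniq (⟨⟨h1, hHG hh1⟩, ⟨a1, ha1⟩⟩ : ↥(G : Set Γ) × ↥(A : Set Γ)) rfl
        have e2 := huniq (⟨⟨h2, hHG hh2⟩, ⟨a2, ha2⟩⟩ : ↥(G : Set Γ) × ↥(A : Set Γ)) heq.symm
        have := e1.trans e2.symm
        have h12 : h1 = h2 := congrArg (fun p : ↥(G : Set Γ) × ↥(A : Set Γ) => (p.1 : Γ)) this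
        have a12 : a1 = a2 := congrArg (fun p : ↥(G : Set Γ) × ↥(A : Set Γ) => (p.2 : Γ)) this
        simp only [Prod.mk.injEq, Subtype.mk.injEq]
        exact ⟨h12, a12⟩
      · rintro ⟨x, hx⟩
        have hx' : x ∈ (H : Set Γ) * (A : Set Γ) := by rw [← hK]; exact hx
        obtain ⟨h, hh, a, ha, hha⟩ := Set.mem_mul.mp hx'
        exact ⟨⟨⟨h, hh⟩, ⟨a, ha⟩⟩, Subtype.ext hha⟩
    have cardK : Nat.card K = Nat.card H * Nat.card A := by
      rw [← Nat.card_prod]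
      exact (Nat.card_eq_of_bijective _ hbij).symm
    have cardΓ : Nat.card G * Nat.card A = Nat.card Γ := hcomp.card_mul
    have h1 : K.index * Nat.card K = Nat.card Γ := K.index_mul_card
    have cardHG : Nat.card (H.subgroupOf G) = Nat.card H :=
      Nat.card_congr (Subgroup.subgroupOfEquivOfLe hHG).toEquiv
    have h2 : H.relIndex G * Nat.card H = Nat.card G := by
      rw [← cardHG]
      exact (H.subgroupOf G).index_mul_card
    have hpos : 0 < Nat.card H * Nat.card A :=
      Nat.mul_pos Nat.card_pos Nat.card_pos
    apply Nat.eq_of_mul_eq_mul_right hpos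
    rw [cardK] at h1
    rw [h1, ← cardΓ, ← h2, mul_assoc]
  refine ⟨key, ?_⟩
  intro H' hAH'
  have hset : ((G ⊓ H' : Subgroup Γ) : Set Γ) * (A : Set Γ) = (H' : Set Γ) := by
    apply Set.Subset.antisymm
    · rintro x hx
      obtain ⟨g, hg, a, ha, hga⟩ := Set.mem_mul.mp hx
      rw [SetLike.mem_coe, Subgroup.mem_inf] at hg
      rw [← hga]
      exact H'.mul_mem hg.2 (hAH' ha)
    · intro x hx
      obtain ⟨⟨⟨g, hg⟩, ⟨a, ha⟩⟩, he⟩ := (hcomp.existsUnique x).exists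
      have he' : g * a = x := he
      have hgH' : g ∈ H' := by
        have : x * a⁻¹ ∈ H' := H'.mul_mem hx (H'.inv_mem (hAH' ha))
        have hg' : g = x * a⁻¹ := eq_mul_inv_of_mul_eq he'
        rwa [hg']
      have : g * a ∈ ((G ⊓ H' : Subgroup Γ) : Set Γ) * (A : Set Γ) :=
        Set.mul_mem_mul (by rw [SetLike.mem_coe, Subgroup.mem_inf]; exact ⟨hg, hgH'⟩) ha
      rwa [he'] at this
  refine ⟨hset, ?_⟩
  exact ((key (G ⊓ H') inf_le_left H' hset.symm).2.2).symm
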